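/- For the sphere f(u,v) = (sin u cos v, cos u cos v, sin v) in R³₁, the lightlike point set {(u,v) : λ(u,v) = 0, |v| < π/2} equals {(u,v) : v = π/4 or v = −π/4}, and at every such point the differential dλ is nonzero (every lightlike point is non-degenerate). -/

import Mathlib

noncomputable section

def mdot (x y : Fin 3 → ℝ) : ℝ := x 0 * y 0 + x 1 * y 1 - x 2 * y 2

def sphere3 (u v : ℝ) : Fin 3 → ℝ :=
  ![Real.sin u * Real.cos v, Real.cos u * Real.cos v, Real.sin v]

def sphere3u (u v : ℝ) : Fin 3 → ℝ := deriv (fun t => sphere3 t v) u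

def sphere3v (u v : ℝ) : Fin 3 → ℝ := deriv (fun t => sphere3 u t) v

/-- The discriminant function of the sphere in `R³₁`. -/
def sphereLam (p : ℝ × ℝ) : ℝ :=
  mdot (sphere3u p.1 p.2) (sphere3u p.1 p.2) *
      mdot (sphere3v p.1 p.2) (sphere3v p.1 p.2) -
    mdot (sphere3u p.1 p.2) (sphere3v p.1 p.2) ^ 2

open Real

lemma sphere3u_eq (u v : ℝ) :
    sphere3u u v = ![Real.cos u * Real.cos v, -Real.sin u * Real.cos v, 0] := by
  have h : HasDerivAt (fun t => sphere3 t v)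
      (![Real.cos u * Real.cos v, -Real.sin u * Real.cos v, 0]) u := by
    rw [hasDerivAt_pi]
    intro i
    fin_cases i
    · simpa [sphere3] using (Real.hasDerivAt_sin u).mul_const (Real.cos v)
    · simpa [sphere3] using (Real.hasDerivAt_cos u).mul_const (Real.cos v)
    · simpa [sphere3] using hasDerivAt_const u (Real.sin v)
  exact h.deriv

lemma sphere3v_eq (u v : ℝ) :
    sphere3v u v = ![-(Real.sin u * Real.sin v), -(Real.cos u * Real.sin v), Real.cos v] := by
  have h : HasDerivAt (fun t => sphere3 u t)
      (![-(Real.sin u * Real.sin v), -(Real.cos u * Real.sin v), Real.cos v]) v := by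
    rw [hasDerivAt_pi]
    intro i
    fin_cases i
    · simpa [sphere3, mul_comm] using (Real.hasDerivAt_cos v).const_mul (Real.sin u)
    · simpa [sphere3, mul_comm] using (Real.hasDerivAt_cos v).const_mul (Real.cos u)
    · simpa [sphere3] using Real.hasDerivAt_sin v
  exact h.deriv

def gfun (v : ℝ) : ℝ := Real.cos v ^ 2 * (Real.sin v ^ 2 - Real.cos v ^ 2)

lemma sphereLam_eq (p : ℝ × ℝ) : sphereLam p = gfun p.2 := by
  simp only [sphereLam, mdot, sphere3u_eq, sphere3v_eq, gfun]
  simp [Fin.isValue, Matrix.cons_val_zero, Matrix.cons_val_one, Matrix.head_cons]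
  have hs := Real.sin_sq_add_cos_sq p.1
  linear_combination (Real.cos p.2 ^ 2 * Real.sin p.2 ^ 2 * (Real.sin p.1 ^ 2 + Real.cos p.1 ^ 2 + 1) -
    Real.cos p.2 ^ 4) * hs

theorem sphere_lightlike_set_nondegenerate :
    {p : ℝ × ℝ | sphereLam p = 0 ∧ |p.2| < Real.pi / 2} =
      {p : ℝ × ℝ | p.2 = Real.pi / 4 ∨ p.2 = -(Real.pi / 4)} ∧
    ∀ p : ℝ × ℝ, sphereLam p = 0 → |p.2| < Real.pi / 2 →
      fderiv ℝ sphereLam p ≠ 0 := by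
  have hpi := Real.pi_pos
  -- characterization of zeros
  have hchar : ∀ v : ℝ, gfun v = 0 → |v| < Real.pi / 2 → v = Real.pi / 4 ∨ v = -(Real.pi / 4) := by
    intro v h0 hv
    rw [abs_lt] at hv
    have hc : 0 < Real.cos v := Real.cos_pos_of_mem_Ioo ⟨hv.1, hv.2⟩
    have h2 : Real.sin v ^ 2 - Real.cos v ^ 2 = 0 := by
      rcases mul_eq_zero.1 h0 with h | h
      · exact absurd h (by positivity)
      · exact h
    have hcos2 : Real.cos (2 * v) = 0 := by
      rw [Real.cos_two_mul']
      linarith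
    rw [Real.cos_eq_zero_iff] at hcos2
    obtain ⟨k, hk⟩ := hcos2
    have hb1 : -Real.pi < 2 * v := by linarith
    have hb2 : 2 * v < Real.pi := by linarith
    have hq1 : (k : ℝ) < 1 := by nlinarith
    have hq2 : (-2 : ℝ) < (k : ℝ) := by nlinarith
    have hk1 : k < 1 := by exact_mod_cast hq1
    have hk2 : -2 < k := by exact_mod_cast hq2
    interval_cases k
    · right; push_cast at hk; linarith
    · left; push_cast at hk; linarith
  have hval : ∀ v : ℝ, (v = Real.pi / 4 ∨ v = -(Real.pi / 4)) → gfun v = 0 := by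
    rintro v (rfl | rfl) <;>
      simp [gfun, Real.cos_pi_div_four, Real.sin_pi_div_four] <;> ring
  constructor
  · ext p
    simp only [Set.mem_setOf_eq, sphereLam_eq]
    constructor
    · rintro ⟨h0, hv⟩
      exact hchar p.2 h0 hv
    · intro h
      refine ⟨hval p.2 h, ?_⟩
      rcases h with h | h <;> rw [h, abs_lt] <;> constructor <;> linarith
  · intro p h0 hv
    have hp := hchar p.2 (by rwa [sphereLam_eq] at h0) hv
    -- derivative of gfun
    set v := p.2 with hvdef
    have hc : HasDerivAt Real.cos (-Real.sin v) v := Real.hasDerivAt_cos v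
    have hs : HasDerivAt Real.sin (Real.cos v) v := Real.hasDerivAt_sin v
    have hc2 : HasDerivAt (fun t => Real.cos t ^ 2) ((2 : ℕ) * Real.cos v ^ 1 * (-Real.sin v)) v := hc.pow 2
    have hs2 : HasDerivAt (fun t => Real.sin t ^ 2) ((2 : ℕ) * Real.sin v ^ 1 * (Real.cos v)) v := hs.pow 2
    have hg : HasDerivAt gfun
        (((2 : ℕ) * Real.cos v ^ 1 * (-Real.sin v)) * (Real.sin v ^ 2 - Real.cos v ^ 2)
          + Real.cos v ^ 2 * (((2 : ℕ) * Real.sin v ^ 1 * (Real.cos v)) - ((2 : ℕ) * Real.cos v ^ 1 * (-Real.sin v)))) v :=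
      hc2.mul (hs2.sub hc2)
    set D := (((2 : ℕ) * Real.cos v ^ 1 * (-Real.sin v)) * (Real.sin v ^ 2 - Real.cos v ^ 2)
          + Real.cos v ^ 2 * (((2 : ℕ) * Real.sin v ^ 1 * (Real.cos v)) - ((2 : ℕ) * Real.cos v ^ 1 * (-Real.sin v)))) with hD
    have hDne : D ≠ 0 := by
      have h2 : Real.sqrt 2 ^ 2 = 2 := Real.sq_sqrt (by norm_num)
      rcases hp with h | h <;> rw [hD, h] <;>
        simp [Real.cos_pi_div_four, Real.sin_pi_div_four] <;> nlinarith [h2]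
    have hF : HasFDerivAt sphereLam (D • (ContinuousLinearMap.snd ℝ ℝ ℝ)) p := by
      have : HasFDerivAt (fun q : ℝ × ℝ => gfun q.2) (D • (ContinuousLinearMap.snd ℝ ℝ ℝ)) p := by
        have := hg.hasFDerivAt.comp p (hasFDerivAt_snd (𝕜 := ℝ))
        refine this.congr_fderiv ?_
        refine ContinuousLinearMap.ext fun x => ?_
        simp [ContinuousLinearMap.smul_apply, smul_eq_mul, mul_comm]
      have heq : sphereLam = fun q : ℝ × ℝ => gfun q.2 := funext sphereLam_eq
      rw [heq]
      exact this
    intro hzero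
    have : fderiv ℝ sphereLam p = D • (ContinuousLinearMap.snd ℝ ℝ ℝ) := hF.fderiv
    rw [hzero] at this
    have := congrArg (fun L : ℝ × ℝ →L[ℝ] ℝ => L (0, 1)) this
    simp [ContinuousLinearMap.smul_apply] at this
    exact hDne this.symm

end
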